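/- Martingale-theoretic direct product theorem (Theorem 7, abstract form). Let I₁,…,I_r be nonempty finite sets, p_i a probability distribution on I_i for each i, and equip Ω = I₁ × ⋯ × I_r with the product measure. Let t > 0, s > 0, 0 < ε ≤ t, and let m be a positive integer. For each j ∈ Fin m and each 1 ≤ i ≤ r, let C_{j,i} : I₁ × ⋯ × I_i → ℝ be nonnegative (so the random variable C_{j,i}(σ₁,…,σ_i) depends only on the first i coordinates), and suppose that for every history w ∈ I₁ × ⋯ × I_{i−1}: Σ_{x ∈ I_i} p_i(x)·C_{j,i}(w,x) ≥ t and Σ_{x ∈ I_i} p_i(x)·(C_{j,i}(w,x) − t)² ≤ s². Then, writing γ = s²/t² and α = ε/t, P_{σ}[ ∃ j ∈ Fin m : Σ_{i=1}^r C_{j,i}(σ₁,…,σ_i) ≤ (t − ε)·r ] ≤ m · 2^{ − K_{γ/(1+γ)}( (α+γ)/(1+γ) ) · r }. (With m = 2^b this is the bound for an algorithm reading b bits of advice.) -/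

import Mathlib

open Classical

/-- The binary-divergence-type function `K_y(x) = x log₂(x/y) + (1-x) log₂((1-x)/(1-y))`. -/
noncomputable def Kfun (y x : ℝ) : ℝ :=
  x * Real.logb 2 (x / y) + (1 - x) * Real.logb 2 ((1 - x) / (1 - y))

section Auxiliary

open Real Set

lemma phi_nonneg {u v : ℝ} (hu : 0 < u) (hv : 0 ≤ v) :
    Real.exp (-v) ≤ 1 + (Real.exp (-u) - 1) * (v / u)
      + ((1 - Real.exp (-u) - u * Real.exp (-u)) / u ^ 2) * (v * (v - u)) := by
  set E := Real.exp (-u) with hE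
  have hEpos : 0 < E := Real.exp_pos _
  have hXE : Real.exp u * E = 1 := by rw [hE, ← Real.exp_add]; simp
  have hXq : 1 + u + u ^ 2 / 2 ≤ Real.exp u := Real.quadratic_le_exp_of_nonneg hu.le
  have hX1 : u + 1 < Real.exp u := Real.add_one_lt_exp hu.ne'
  set W := (1 - E - u * E) / u ^ 2 with hWdef
  have hu2 : (0:ℝ) < u ^ 2 := by positivity
  have hnum : 0 < 1 - E - u * E := by nlinarith [mul_lt_mul_of_pos_right hX1 hEpos]
  have hW0 : 0 < W := div_pos hnum hu2
  have hWu : E ≤ 2 * W := by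
    rw [hWdef, mul_div_assoc', le_div_iff₀ hu2]
    nlinarith [mul_le_mul_of_nonneg_left hXq hEpos.le]
  set A := (E - 1) / u with hA
  set φ : ℝ → ℝ := fun z => 1 + A * z + W * (z * (z - u)) - Real.exp (-z) with hφdef
  set ψ : ℝ → ℝ := fun z => A + W * (2 * z - u) + Real.exp (-z) with hψdef
  have hexpd : ∀ z : ℝ, HasDerivAt (fun z : ℝ => Real.exp (-z)) (-Real.exp (-z)) z := by
    intro z
    simpa using (hasDerivAt_neg z).exp
  have hφ : ∀ z, HasDerivAt φ (ψ z) z := by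
    intro z
    have h1 : HasDerivAt (fun z : ℝ => 1 + A * z + z * (z - u) * W)
        (0 + A * 1 + (1 * (z - u) + z * 1) * W) z :=
      ((hasDerivAt_const z (1:ℝ)).add ((hasDerivAt_id' z).const_mul A)).add
        (((hasDerivAt_id' z).mul ((hasDerivAt_id' z).sub_const u)).mul_const W)
    have h2 := h1.sub (hexpd z)
    have hfe : (fun z : ℝ => 1 + A * z + z * (z - u) * W - Real.exp (-z)) = φ := by
      funext y; simp only [hφdef]; ring
    rw [show ((fun z : ℝ => 1 + A * z + z * (z - u) * W) - fun z : ℝ => Real.exp (-z)) = φ from hfe] at h2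
    refine h2.congr_deriv ?_
    simp only [hψdef]; ring
  have hψ : ∀ z, HasDerivAt ψ (2 * W - Real.exp (-z)) z := by
    intro z
    have h1 : HasDerivAt (fun z : ℝ => A + W * (2 * z - u)) (0 + W * (2 * 1)) z :=
      (hasDerivAt_const z A).add
        ((((hasDerivAt_id' z).const_mul (2:ℝ)).sub_const u).const_mul W)
    have h2 := h1.add (hexpd z)
    have hfe : (fun z : ℝ => A + W * (2 * z - u) + Real.exp (-z)) = ψ := by
      funext y; simp only [hψdef]
    rw [show ((fun z : ℝ => A + W * (2 * z - u)) + fun z : ℝ => Real.exp (-z)) = ψ from hfe] at h2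
    refine h2.congr_deriv ?_
    ring
  have hφ0 : φ 0 = 0 := by simp [hφdef]
  have hφu : φ u = 0 := by
    simp only [hφdef, hA, hE, sub_self, mul_zero]
    field_simp
    ring
  have hψu : ψ u = 0 := by
    simp only [hψdef, hA, hWdef]
    field_simp
    ring
  set v₀ : ℝ := -Real.log (2 * W) with hv₀def
  have h2W : (0:ℝ) < 2 * W := by linarith
  have hexpv₀ : Real.exp (-v₀) = 2 * W := by
    rw [hv₀def, neg_neg, Real.exp_log h2W]
  have hv₀u : v₀ ≤ u := by
    have : Real.log E ≤ Real.log (2 * W) := Real.log_le_log hEpos hWu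
    rw [hE, Real.log_exp] at this
    simp only [hv₀def]
    linarith
  -- ψ is monotone on [v₀, ∞)
  have hψmono : MonotoneOn ψ (Ici v₀) := by
    apply monotoneOn_of_hasDerivWithinAt_nonneg (convex_Ici v₀)
      (fun z _ => (hψ z).continuousAt.continuousWithinAt)
      (fun z _ => (hψ z).hasDerivWithinAt)
    intro z hz
    rw [interior_Ici] at hz
    have : Real.exp (-z) ≤ Real.exp (-v₀) := Real.exp_le_exp.2 (by linarith [(Set.mem_Ioi.1 hz).le])
    rw [hexpv₀] at this; linarith
  have hψle : ∀ z ∈ Icc v₀ u, ψ z ≤ 0 := fun z hz => by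
    have h := hψmono (mem_Ici.2 hz.1) (mem_Ici.2 hv₀u) hz.2
    rw [hψu] at h; exact h
  have hψge : ∀ z ∈ Ici u, 0 ≤ ψ z := fun z hz => by
    have h := hψmono (mem_Ici.2 hv₀u) (mem_Ici.2 (hv₀u.trans hz)) hz
    rw [hψu] at h; exact h
  -- φ ≥ 0 on [u, ∞)
  have hφge_u : ∀ z ∈ Ici u, 0 ≤ φ z := by
    have hmono : MonotoneOn φ (Ici u) := by
      apply monotoneOn_of_hasDerivWithinAt_nonneg (convex_Ici u)
        (fun z _ => (hφ z).continuousAt.continuousWithinAt)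
        (fun z _ => (hφ z).hasDerivWithinAt)
      intro z hz
      rw [interior_Ici] at hz
      exact hψge z (Set.mem_Ioi.1 hz).le
    intro z hz
    have := hmono (mem_Ici.2 le_rfl) hz hz
    rw [hφu] at this; exact this
  -- φ ≥ 0 on [v₀, u]
  have hφge_m : ∀ z ∈ Icc v₀ u, 0 ≤ φ z := by
    have hanti : AntitoneOn φ (Icc v₀ u) := by
      apply antitoneOn_of_hasDerivWithinAt_nonpos (convex_Icc v₀ u)
        (fun z _ => (hφ z).continuousAt.continuousWithinAt)
        (fun z _ => (hφ z).hasDerivWithinAt)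
      intro z hz
      rw [interior_Icc] at hz
      exact hψle z ⟨hz.1.le, hz.2.le⟩
    intro z hz
    have := hanti hz ⟨hv₀u, le_rfl⟩ hz.2
    rw [hφu] at this; exact this
  -- main goal: φ v ≥ 0
  suffices h : 0 ≤ φ v by
    simp only [hφdef, hA] at h
    have : (E - 1) / u * v = (E - 1) * (v / u) := by ring
    linarith [h, this.symm ▸ h]
  rcases le_or_gt v₀ v with hcase | hcase
  · rcases le_or_gt v u with hc2 | hc2
    · exact hφge_m v ⟨hcase, hc2⟩
    · exact hφge_u v hc2.le
  · -- v < v₀, use MVT argument with φ concave on [0, v₀]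
    by_contra h
    push_neg at h
    have hv0 : 0 < v := by
      rcases hv.eq_or_lt with h0 | h0
      · rw [← h0, hφ0] at h; linarith
      · exact h0
    have hφv₀ : 0 ≤ φ v₀ := hφge_m v₀ ⟨le_rfl, hv₀u⟩
    have hcont : ∀ s : Set ℝ, ContinuousOn φ s := fun s z _ =>
      (hφ z).continuousAt.continuousWithinAt
    have hdiff : ∀ s : Set ℝ, DifferentiableOn ℝ φ s := fun s z _ =>
      (hφ z).differentiableAt.differentiableWithinAt
    obtain ⟨c, hc, hc'⟩ := exists_deriv_eq_slope φ hv0 (hcont _) (hdiff _)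
    obtain ⟨d, hd, hd'⟩ := exists_deriv_eq_slope φ hcase (hcont _) (hdiff _)
    have hψanti : AntitoneOn ψ (Icc 0 v₀) := by
      apply antitoneOn_of_hasDerivWithinAt_nonpos (convex_Icc 0 v₀)
        (fun z _ => (hψ z).continuousAt.continuousWithinAt)
        (fun z _ => (hψ z).hasDerivWithinAt)
      intro z hz
      rw [interior_Icc] at hz
      have : Real.exp (-v₀) ≤ Real.exp (-z) := Real.exp_le_exp.2 (by linarith [hz.2])
      rw [hexpv₀] at this; linarith
    have hcd : c < d := hc.2.trans hd.1
    have hψc : ψ c < 0 := by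
      have : deriv φ c = ψ c := (hφ c).deriv
      rw [this] at hc'
      rw [hc', hφ0]
      apply div_neg_of_neg_of_pos <;> linarith
    have hψd : 0 < ψ d := by
      have : deriv φ d = ψ d := (hφ d).deriv
      rw [this] at hd'
      rw [hd']
      apply div_pos <;> linarith
    have := hψanti (⟨hc.1.le, (hc.2.trans hd.1).le.trans hd.2.le⟩ : c ∈ Icc 0 v₀)
      (⟨(hv0.trans hd.1).le, hd.2.le⟩ : d ∈ Icc 0 v₀) hcd.le
    linarith

lemma step_bound {I : Type*} [Fintype I] (p : I → ℝ) (hp0 : ∀ x, 0 ≤ p x)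
    (hp1 : ∑ x, p x = 1) (f : I → ℝ) (hf0 : ∀ x, 0 ≤ f x)
    {t s : ℝ} (ht : 0 < t) (hs : 0 < s)
    (hmean : t ≤ ∑ x, p x * f x) (hvar : ∑ x, p x * (f x - t) ^ 2 ≤ s ^ 2)
    {c : ℝ} (hc : 0 < c) :
    ∑ x, p x * Real.exp (-(c * f x)) ≤
      s ^ 2 / (t ^ 2 + s ^ 2) + t ^ 2 / (t ^ 2 + s ^ 2) * Real.exp (-(c * (t + s ^ 2 / t))) := by
  set M := t + s ^ 2 / t with hMdef
  have hM : 0 < M := by rw [hMdef]; positivity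
  have hMt : M * t = t ^ 2 + s ^ 2 := by rw [hMdef]; field_simp
  set u := c * M with hudef
  have hu : 0 < u := mul_pos hc hM
  set E := Real.exp (-u) with hEdef
  have hEpos : 0 < E := Real.exp_pos _
  have hXE : Real.exp u * E = 1 := by rw [hEdef, ← Real.exp_add]; simp
  have hEu1 : (1 + u) * E ≤ 1 := by
    nlinarith [mul_le_mul_of_nonneg_right (Real.add_one_le_exp u) hEpos.le]
  have hEu1' : E + u * E ≤ 1 := by nlinarith [hEu1]
  have huE : 0 ≤ u * E := mul_nonneg hu.le hEpos.le
  have h2E : 2 * E - 2 + u * E ≤ 0 := by linarith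
  have hMeq : M = (t ^ 2 + s ^ 2) / t := (eq_div_iff ht.ne').2 hMt
  clear_value M u E
  set W2 := (1 - E - u * E) / M ^ 2 with hW2def
  have hW2 : 0 ≤ W2 := div_nonneg (by linarith) (by positivity)
  clear_value W2
  have hpoint : ∀ x, Real.exp (-(c * f x)) ≤
      1 + (E - 1) * (f x / M) + W2 * (f x * (f x - M)) := by
    intro x
    have h := phi_nonneg (u := u) (v := c * f x) hu (mul_nonneg hc.le (hf0 x))
    have e1 : c * f x / u = f x / M := by
      rw [hudef]; field_simp [hc.ne']
    rw [← hEdef] at h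
    have e2 : (1 - E - u * E) / u ^ 2 * (c * f x * (c * f x - u))
        = W2 * (f x * (f x - M)) := by
      rw [hW2def, hudef]
      field_simp [hc.ne', hM.ne']
    rw [e1, e2] at h
    exact h
  have hsum : ∑ x, p x * Real.exp (-(c * f x)) ≤
      ∑ x, p x * (1 + (E - 1) * (f x / M) + W2 * (f x * (f x - M))) :=
    Finset.sum_le_sum fun x _ => mul_le_mul_of_nonneg_left (hpoint x) (hp0 x)
  set μ := ∑ x, p x * f x with hμdef
  set Q := ∑ x, p x * f x ^ 2 with hQdef
  clear_value μ Q
  have hsum2 : ∑ x, p x * (1 + (E - 1) * (f x / M) + W2 * (f x * (f x - M)))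
      = 1 + (E - 1) / M * μ + W2 * (Q - M * μ) := by
    have hexp : ∀ x, p x * (1 + (E - 1) * (f x / M) + W2 * (f x * (f x - M)))
        = p x + (E - 1) / M * (p x * f x) + W2 * (p x * f x ^ 2) - W2 * M * (p x * f x) := by
      intro x; field_simp; ring
    simp only [hexp, Finset.sum_add_distrib, Finset.sum_sub_distrib, ← Finset.mul_sum, hp1,
      ← hμdef, ← hQdef]
    ring
  have hQle : Q ≤ s ^ 2 + 2 * t * μ - t ^ 2 := by
    have hvareq : ∑ x, p x * (f x - t) ^ 2 = Q - 2 * t * μ + t ^ 2 := by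
      have hexp : ∀ x, p x * (f x - t) ^ 2
          = p x * f x ^ 2 - 2 * t * (p x * f x) + t ^ 2 * p x := by intro x; ring
      simp only [hexp, Finset.sum_add_distrib, Finset.sum_sub_distrib, ← Finset.mul_sum, hp1,
        ← hμdef, ← hQdef]
      ring
    rw [hvareq] at hvar
    linarith
  -- key coefficient inequality
  have hkeynum : (E - 1) * M + (1 - E - u * E) * (2 * t - M) ≤ 0 := by
    have hid : t * ((E - 1) * M + (1 - E - u * E) * (2 * t - M))
        = s ^ 2 * (2 * E - 2 + u * E) - u * E * t ^ 2 := by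
      linear_combination (E - 1 - (1 - E - u * E)) * hMt
    nlinarith [hid, mul_nonpos_of_nonneg_of_nonpos (sq_nonneg s) h2E,
      mul_nonneg huE (sq_nonneg t)]
  have key : (E - 1) / M + W2 * (2 * t - M) ≤ 0 := by
    have hq : (E - 1) / M + W2 * (2 * t - M)
        = ((E - 1) * M + (1 - E - u * E) * (2 * t - M)) / M ^ 2 := by
      rw [hW2def]; field_simp
    rw [hq]
    exact div_nonpos_of_nonpos_of_nonneg hkeynum (by positivity)
  -- assemble
  have step1 : 1 + (E - 1) / M * μ + W2 * (Q - M * μ)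
      ≤ 1 + (E - 1) / M * μ + W2 * (s ^ 2 + 2 * t * μ - t ^ 2 - M * μ) := by
    have d1 : (1 + (E - 1) / M * μ + W2 * (s ^ 2 + 2 * t * μ - t ^ 2 - M * μ))
        - (1 + (E - 1) / M * μ + W2 * (Q - M * μ))
        = W2 * (s ^ 2 + 2 * t * μ - t ^ 2 - Q) := by ring
    linarith [mul_nonneg hW2 (by linarith : (0:ℝ) ≤ s ^ 2 + 2 * t * μ - t ^ 2 - Q), d1]
  have hWMt : W2 * (M * t) = W2 * (t ^ 2 + s ^ 2) := by rw [hMt]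
  have step2 : 1 + (E - 1) / M * μ + W2 * (s ^ 2 + 2 * t * μ - t ^ 2 - M * μ)
      ≤ 1 + (E - 1) / M * t := by
    have d2 : (1 + (E - 1) / M * μ + W2 * (s ^ 2 + 2 * t * μ - t ^ 2 - M * μ))
        - (1 + (E - 1) / M * t)
        = (μ - t) * ((E - 1) / M + W2 * (2 * t - M)) + (W2 * (t ^ 2 + s ^ 2) - W2 * (M * t)) := by
      ring
    linarith [mul_nonpos_of_nonneg_of_nonpos (by linarith [hmean] : (0:ℝ) ≤ μ - t) key, hWMt, d2]
  have step3 : 1 + (E - 1) / M * t = s ^ 2 / (t ^ 2 + s ^ 2) + t ^ 2 / (t ^ 2 + s ^ 2) * E := by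
    rw [hMeq]
    have h1 : t ^ 2 + s ^ 2 ≠ 0 := by positivity
    field_simp
    ring
  calc ∑ x, p x * Real.exp (-(c * f x))
      ≤ 1 + (E - 1) / M * μ + W2 * (Q - M * μ) := by rw [← hsum2]; exact hsum
    _ ≤ 1 + (E - 1) / M * t := step1.trans step2
    _ = _ := step3

lemma zero_prob {I : Type*} [Fintype I] (p : I → ℝ) (hp0 : ∀ x, 0 ≤ p x)
    (hp1 : ∑ x, p x = 1) (f : I → ℝ)
    {t s : ℝ} (ht : 0 < t) (hs : 0 < s)
    (hmean : t ≤ ∑ x, p x * f x) (hvar : ∑ x, p x * (f x - t) ^ 2 ≤ s ^ 2) :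
    ∑ x, p x * (if f x = 0 then (1:ℝ) else 0) ≤ s ^ 2 / (t ^ 2 + s ^ 2) := by
  classical
  set μ := ∑ x, p x * f x with hμdef
  set Q := ∑ x, p x * f x ^ 2 with hQdef
  set Z := ∑ x, p x * (if f x = 0 then (1:ℝ) else 0) with hZdef
  have hQle : Q ≤ s ^ 2 + 2 * t * μ - t ^ 2 := by
    have hexp : ∀ x, p x * (f x - t) ^ 2
        = p x * f x ^ 2 - 2 * t * (p x * f x) + t ^ 2 * p x := fun x => by ring
    have hvareq : ∑ x, p x * (f x - t) ^ 2 = Q - 2 * t * μ + t ^ 2 := by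
      simp only [hexp, Finset.sum_add_distrib, Finset.sum_sub_distrib, ← Finset.mul_sum, hp1,
        ← hμdef, ← hQdef]
      ring
    rw [hvareq] at hvar
    linarith
  have hZ1 : Z ≤ 1 := by
    rw [hZdef, ← hp1]
    apply Finset.sum_le_sum
    intro x _
    split_ifs <;> nlinarith [hp0 x]
  have hCS : μ ^ 2 ≤ (1 - Z) * Q := by
    have key := Finset.sum_mul_sq_le_sq_mul_sq Finset.univ
      (fun x => Real.sqrt (p x) * (if f x = 0 then 0 else 1))
      (fun x => Real.sqrt (p x) * f x)
    have e1 : ∑ x, (Real.sqrt (p x) * (if f x = 0 then 0 else 1)) * (Real.sqrt (p x) * f x) = μ := by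
      rw [hμdef]
      refine Finset.sum_congr rfl fun x _ => ?_
      have hsq : Real.sqrt (p x) * Real.sqrt (p x) = p x := Real.mul_self_sqrt (hp0 x)
      split_ifs with h
      · rw [h]; ring
      · linear_combination f x * hsq
    have e2 : ∑ x, (Real.sqrt (p x) * (if f x = 0 then 0 else 1)) ^ 2 = 1 - Z := by
      have hZalt : (1:ℝ) - Z = ∑ x, (p x - p x * (if f x = 0 then 1 else 0)) := by
        rw [Finset.sum_sub_distrib, hp1, ← hZdef]
      rw [hZalt]
      refine Finset.sum_congr rfl fun x _ => ?_
      have hsq : Real.sqrt (p x) ^ 2 = p x := Real.sq_sqrt (hp0 x)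
      split_ifs with h
      · simp
      · simp [hsq]
    have e3 : ∑ x, (Real.sqrt (p x) * f x) ^ 2 = Q := by
      rw [hQdef]
      refine Finset.sum_congr rfl fun x _ => ?_
      rw [mul_pow, Real.sq_sqrt (hp0 x)]
    rw [e1, e2, e3] at key
    exact key
  have hB : (0:ℝ) < s ^ 2 + 2 * t * μ - t ^ 2 := by nlinarith
  have hCS2 : μ ^ 2 ≤ (1 - Z) * (s ^ 2 + 2 * t * μ - t ^ 2) :=
    hCS.trans (mul_le_mul_of_nonneg_left hQle (by linarith))
  rw [le_div_iff₀ (by positivity : (0:ℝ) < t ^ 2 + s ^ 2)]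
  have h2 : t ^ 2 * (s ^ 2 + 2 * t * μ - t ^ 2) ≤ μ ^ 2 * (t ^ 2 + s ^ 2) := by
    nlinarith [sq_nonneg (μ - t), mul_nonneg (by linarith : (0:ℝ) ≤ μ - t)
      (by linarith : (0:ℝ) ≤ μ + t), sq_nonneg s]
  nlinarith [mul_le_mul_of_nonneg_right hCS2 (by positivity : (0:ℝ) ≤ t ^ 2 + s ^ 2), h2, hB]

lemma seq_bound {r : ℕ} {I : Fin r → Type*} [∀ i, Fintype (I i)] [∀ i, Nonempty (I i)]
    (p : ∀ i, I i → ℝ) (hp0 : ∀ i x, 0 ≤ p i x) (hp1 : ∀ i, ∑ x, p i x = 1)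
    (G : Fin r → (∀ k, I k) → ℝ) (hG0 : ∀ i σ, 0 ≤ G i σ)
    (hGdep : ∀ i (σ σ' : ∀ k, I k), (∀ k, k ≤ i → σ k = σ' k) → G i σ = G i σ')
    {q : ℝ} (hq : 0 ≤ q)
    (hGstep : ∀ i (σ : ∀ k, I k), ∑ x : I i, p i x * G i (Function.update σ i x) ≤ q) :
    ∑ σ : ∀ k, I k, (∏ k, p k (σ k)) * ∏ i, G i σ ≤ q ^ r := by
  have main : ∀ n : ℕ, n ≤ r →
      ∑ σ : ∀ k, I k, (∏ k, p k (σ k)) *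
        ∏ i ∈ Finset.univ.filter (fun i : Fin r => (i : ℕ) < n), G i σ ≤ q ^ n := by
    intro n
    induction n with
    | zero =>
      intro _
      have hemp : (Finset.univ.filter (fun i : Fin r => (i : ℕ) < 0)) = ∅ := by
        apply Finset.filter_false_of_mem; intro i _; omega
      rw [hemp]
      simp only [Finset.prod_empty, mul_one, pow_zero]
      rw [show (∑ σ : ∀ k, I k, ∏ k, p k (σ k)) = ∏ k, ∑ x, p k x from
        (Fintype.prod_sum (fun k x => p k x)).symm]
      rw [Finset.prod_congr rfl fun k _ => hp1 k, Finset.prod_const_one]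
    | succ n ih =>
      intro hn1
      have hnr : n < r := hn1
      set i₀ : Fin r := ⟨n, hnr⟩ with hi₀def
      have hfilter : Finset.univ.filter (fun i : Fin r => (i : ℕ) < n + 1)
          = insert i₀ (Finset.univ.filter (fun i : Fin r => (i : ℕ) < n)) := by
        ext i
        simp only [Finset.mem_filter, Finset.mem_univ, true_and, Finset.mem_insert, Fin.ext_iff,
          hi₀def]
        omega
      have hi₀mem : i₀ ∉ Finset.univ.filter (fun i : Fin r => (i : ℕ) < n) := by
        simp [hi₀def]
      set e := Equiv.piSplitAt i₀ I with hedef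
      -- basic facts about e.symm
      have hA : ∀ (x : I i₀) (w : ∀ j : {j : Fin r // j ≠ i₀}, I j), e.symm (x, w) i₀ = x := by
        intro x w
        simp [hedef, Equiv.piSplitAt]
      have hB : ∀ (x : I i₀) (w : ∀ j : {j : Fin r // j ≠ i₀}, I j) (j : Fin r) (h : j ≠ i₀),
          e.symm (x, w) j = w ⟨j, h⟩ := by
        intro x w j h
        simp [hedef, Equiv.piSplitAt, h]
      set x₀ : I i₀ := Classical.arbitrary _ with hx₀def
      set base : (∀ j : {j : Fin r // j ≠ i₀}, I j) → (∀ k, I k) :=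
        fun w => e.symm (x₀, w) with hbasedef
      have hbaseB : ∀ (w : ∀ j : {j : Fin r // j ≠ i₀}, I j) (j : Fin r) (h : j ≠ i₀),
          base w j = w ⟨j, h⟩ := fun w j h => hB x₀ w j h
      have hC : ∀ (x : I i₀) (w : ∀ j : {j : Fin r // j ≠ i₀}, I j),
          e.symm (x, w) = Function.update (base w) i₀ x := by
        intro x w
        funext j
        by_cases h : j = i₀
        · subst h
          rw [hA, Function.update_self]
        · rw [hB x w j h, Function.update_of_ne h, hbaseB w j h]
      -- the G-factors with index < n do not depend on the i₀ coordinate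
      have hGind : ∀ (x : I i₀) (w : ∀ j : {j : Fin r // j ≠ i₀}, I j)
          (i : Fin r), (i : ℕ) < n → G i (e.symm (x, w)) = G i (base w) := by
        intro x w i hi
        apply hGdep
        intro k hk
        have hkne : k ≠ i₀ := by
          intro hkk
          rw [hkk] at hk
          have : (i₀ : ℕ) ≤ (i : ℕ) := hk
          simp [hi₀def] at this
          omega
        rw [hB x w k hkne, hbaseB w k hkne]
      -- the p-product splits
      have hPsplit : ∀ (x : I i₀) (w : ∀ j : {j : Fin r // j ≠ i₀}, I j),
          (∏ k, p k (e.symm (x, w) k))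
            = p i₀ x * ∏ j : {j : Fin r // j ≠ i₀}, p j (w j) := by
        intro x w
        rw [← Finset.mul_prod_erase Finset.univ _ (Finset.mem_univ i₀), hA]
        congr 1
        rw [Finset.prod_subtype (Finset.univ.erase i₀) (p := fun j => j ≠ i₀)
          (by intro j; simp) (fun j => p j (e.symm (x, w) j))]
        exact Finset.prod_congr rfl fun j _ => by rw [hB x w j j.2]
      -- rewrite both sums via the equivalence
      have hrw : ∀ (F : (∀ k, I k) → ℝ), (∑ σ : ∀ k, I k, F σ)
          = ∑ x : I i₀, ∑ w : ∀ j : {j : Fin r // j ≠ i₀}, I j, F (e.symm (x, w)) := by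
        intro F
        rw [← Equiv.sum_comp e.symm F, Fintype.sum_prod_type]
      calc ∑ σ : ∀ k, I k, (∏ k, p k (σ k)) *
            ∏ i ∈ Finset.univ.filter (fun i : Fin r => (i : ℕ) < n + 1), G i σ
          = ∑ w : ∀ j : {j : Fin r // j ≠ i₀}, I j,
              ∑ x : I i₀, (p i₀ x * G i₀ (Function.update (base w) i₀ x)) *
                ((∏ j : {j : Fin r // j ≠ i₀}, p j (w j)) *
                  ∏ i ∈ Finset.univ.filter (fun i : Fin r => (i : ℕ) < n), G i (base w)) := by
            rw [hrw, Finset.sum_comm]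
            refine Finset.sum_congr rfl fun w _ => Finset.sum_congr rfl fun x _ => ?_
            rw [hfilter, Finset.prod_insert hi₀mem, hPsplit, ← hC,
              Finset.prod_congr rfl fun i hi => hGind x w i (Finset.mem_filter.1 hi).2]
            ring
        _ ≤ ∑ w : ∀ j : {j : Fin r // j ≠ i₀}, I j,
              q * ((∏ j : {j : Fin r // j ≠ i₀}, p j (w j)) *
                ∏ i ∈ Finset.univ.filter (fun i : Fin r => (i : ℕ) < n), G i (base w)) := by
            apply Finset.sum_le_sum
            intro w _
            rw [← Finset.sum_mul]
            apply mul_le_mul_of_nonneg_right (hGstep i₀ (base w))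
            exact mul_nonneg (Finset.prod_nonneg fun j _ => hp0 j _)
              (Finset.prod_nonneg fun i _ => hG0 i _)
        _ = q * ∑ σ : ∀ k, I k, (∏ k, p k (σ k)) *
              ∏ i ∈ Finset.univ.filter (fun i : Fin r => (i : ℕ) < n), G i σ := by
            rw [← Finset.mul_sum]
            congr 1
            rw [hrw, Finset.sum_comm]
            refine Finset.sum_congr rfl fun w _ => ?_
            rw [show ∑ x : I i₀, (∏ k, p k (e.symm (x, w) k)) *
                  ∏ i ∈ Finset.univ.filter (fun i : Fin r => (i : ℕ) < n), G i (e.symm (x, w))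
                = ∑ x : I i₀, p i₀ x * ((∏ j : {j : Fin r // j ≠ i₀}, p j (w j)) *
                  ∏ i ∈ Finset.univ.filter (fun i : Fin r => (i : ℕ) < n), G i (base w)) from
              Finset.sum_congr rfl fun x _ => by
                rw [hPsplit,
                  Finset.prod_congr rfl fun i hi => hGind x w i (Finset.mem_filter.1 hi).2]
                ring]
            rw [← Finset.sum_mul, hp1, one_mul]
        _ ≤ q * q ^ n := by
            apply mul_le_mul_of_nonneg_left (ih (le_of_lt hnr)) hq
        _ = q ^ (n + 1) := by rw [pow_succ]; ring
  have hfin : Finset.univ.filter (fun i : Fin r => (i : ℕ) < r) = Finset.univ := by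
    apply Finset.filter_true_of_mem
    intro i _
    exact i.2
  have := main r le_rfl
  rw [hfin] at this
  exact this

end Auxiliary

set_option maxHeartbeats 2000000 in
/-- Martingale-theoretic direct product theorem (Theorem 7, abstract form). -/
theorem direct_product_martingale
    {r : ℕ} (hr : 1 ≤ r)
    {I : Fin r → Type*} [∀ i, Fintype (I i)] [∀ i, Nonempty (I i)]
    (p : ∀ i, I i → ℝ) (hp0 : ∀ i x, 0 ≤ p i x) (hp1 : ∀ i, ∑ x, p i x = 1)
    (t s ε : ℝ) (ht : 0 < t) (hs : 0 < s) (hε0 : 0 < ε) (hεt : ε ≤ t)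
    {m : ℕ} (hm : 1 ≤ m)
    (C : Fin m → ∀ i : Fin r, (∀ k, I k) → ℝ)
    (hC0 : ∀ j i σ, 0 ≤ C j i σ)
    (hCdep : ∀ j i (σ σ' : ∀ k, I k), (∀ k : Fin r, k ≤ i → σ k = σ' k) → C j i σ = C j i σ')
    (hCmean : ∀ j i (σ : ∀ k, I k), ∑ x : I i, p i x * C j i (Function.update σ i x) ≥ t)
    (hCvar : ∀ j i (σ : ∀ k, I k),
      ∑ x : I i, p i x * (C j i (Function.update σ i x) - t) ^ 2 ≤ s ^ 2) :
    (∑ σ : ∀ k, I k,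
        if ∃ j : Fin m, (∑ i, C j i σ) ≤ (t - ε) * r then ∏ k, p k (σ k) else 0)
      ≤ (m : ℝ) * (2 : ℝ) ^
          (-(Kfun ((s ^ 2 / t ^ 2) / (1 + s ^ 2 / t ^ 2))
              ((ε / t + s ^ 2 / t ^ 2) / (1 + s ^ 2 / t ^ 2)) * (r : ℝ))) := by
  classical
  have ht2s2 : (0:ℝ) < t ^ 2 + s ^ 2 := by positivity
  set y : ℝ := s ^ 2 / (t ^ 2 + s ^ 2) with hydef
  set xx : ℝ := (ε * t + s ^ 2) / (t ^ 2 + s ^ 2) with hxxdef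
  have hyeq : (s ^ 2 / t ^ 2) / (1 + s ^ 2 / t ^ 2) = y := by
    rw [hydef]; field_simp
  have hxxeq : ((ε / t + s ^ 2 / t ^ 2) / (1 + s ^ 2 / t ^ 2)) = xx := by
    rw [hxxdef]; field_simp
  rw [hyeq, hxxeq]
  have hy0 : 0 < y := by rw [hydef]; positivity
  have hy1 : y < 1 := by
    rw [hydef, div_lt_one ht2s2]; nlinarith
  have hxx0 : 0 < xx := by rw [hxxdef]; positivity
  have hyx : y < xx := by
    rw [hydef, hxxdef, div_lt_div_iff₀ ht2s2 ht2s2]; nlinarith [mul_pos hε0 ht]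
  have hxx1 : xx ≤ 1 := by
    rw [hxxdef, div_le_one ht2s2]; nlinarith
  set B : ℝ := (2 : ℝ) ^ (-(Kfun y xx)) with hBdef
  have hB0 : 0 ≤ B := le_of_lt (Real.rpow_pos_of_pos two_pos _)
  have hBr : (2:ℝ) ^ (-(Kfun y xx * (r:ℝ))) = B ^ r := by
    rw [hBdef, ← Real.rpow_natCast ((2:ℝ) ^ (-(Kfun y xx))) r,
      ← Real.rpow_mul (by norm_num : (0:ℝ) ≤ 2)]
    ring_nf
  clear_value y xx B
  -- per-j bound
  have hperj : ∀ j : Fin m,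
      (∑ σ : ∀ k, I k, if (∑ i, C j i σ) ≤ (t - ε) * r then ∏ k, p k (σ k) else 0)
        ≤ B ^ r := by
    intro j
    rcases lt_or_eq_of_le hεt with hlt | heq
    · -- main case ε < t
      have h1xx : 0 < 1 - xx := by
        rw [hxxdef, sub_pos, div_lt_one ht2s2]; nlinarith [mul_lt_mul_of_pos_right hlt ht]
      have h1y : 0 < 1 - y := by linarith
      set cs : ℝ := y * (1 - xx) / ((1 - y) * xx) with hcsdef
      have hcs0 : 0 < cs := by rw [hcsdef]; positivity
      have hcs1 : cs < 1 := by
        rw [hcsdef, div_lt_one (by positivity)]; nlinarith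
      set c : ℝ := -Real.log cs / (t + s ^ 2 / t) with hcdef
      have hMpos : (0:ℝ) < t + s ^ 2 / t := by positivity
      have hc : 0 < c := div_pos (neg_pos.2 (Real.log_neg hcs0 hcs1)) hMpos
      have hecM : Real.exp (-(c * (t + s ^ 2 / t))) = cs := by
        rw [hcdef]
        rw [div_mul_cancel₀ _ hMpos.ne', neg_neg, Real.exp_log hcs0]
      set qq : ℝ := s ^ 2 / (t ^ 2 + s ^ 2) + t ^ 2 / (t ^ 2 + s ^ 2) * cs with hqqdef
      have hqq0 : 0 ≤ qq := by rw [hqqdef]; positivity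
      clear_value cs c qq
      -- sequential bound for G i σ = exp(-(c * C j i σ))
      have hseq : ∑ σ : ∀ k, I k, (∏ k, p k (σ k)) * ∏ i, Real.exp (-(c * C j i σ))
          ≤ qq ^ r := by
        apply seq_bound p hp0 hp1 _ (fun i σ => (Real.exp_pos _).le)
          (fun i σ σ' h => by rw [hCdep j i σ σ' h]) hqq0
        intro i σ
        have := step_bound (p i) (hp0 i) (hp1 i)
          (fun x => C j i (Function.update σ i x)) (fun x => hC0 j i _)
          ht hs (hCmean j i σ) (hCvar j i σ) hc
        rw [hecM] at this
        exact this.trans_eq (by rw [hqqdef])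
      -- pointwise Chernoff bound
      have hpoint : ∀ σ : ∀ k, I k,
          (if (∑ i, C j i σ) ≤ (t - ε) * r then ∏ k, p k (σ k) else 0)
            ≤ Real.exp (c * ((t - ε) * r)) *
                ((∏ k, p k (σ k)) * ∏ i, Real.exp (-(c * C j i σ))) := by
        intro σ
        have hprodp : 0 ≤ ∏ k, p k (σ k) := Finset.prod_nonneg fun k _ => hp0 k _
        split_ifs with h
        · have hexpprod : ∏ i, Real.exp (-(c * C j i σ))
              = Real.exp (-(c * ∑ i, C j i σ)) := by
            rw [← Real.exp_sum]
            congr 1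
            rw [Finset.mul_sum, ← Finset.sum_neg_distrib]
          have h1 : (1:ℝ) ≤ Real.exp (c * ((t - ε) * r)) * Real.exp (-(c * ∑ i, C j i σ)) := by
            rw [← Real.exp_add, ← Real.exp_zero]
            apply Real.exp_le_exp.2
            nlinarith [mul_nonneg hc.le (sub_nonneg.2 h)]
          calc ∏ k, p k (σ k) = 1 * ∏ k, p k (σ k) := by ring
            _ ≤ (Real.exp (c * ((t - ε) * r)) * Real.exp (-(c * ∑ i, C j i σ)))
                * ∏ k, p k (σ k) := mul_le_mul_of_nonneg_right h1 hprodp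
            _ = _ := by rw [hexpprod]; ring
        · positivity
      calc (∑ σ : ∀ k, I k, if (∑ i, C j i σ) ≤ (t - ε) * r then ∏ k, p k (σ k) else 0)
          ≤ ∑ σ : ∀ k, I k, Real.exp (c * ((t - ε) * r)) *
              ((∏ k, p k (σ k)) * ∏ i, Real.exp (-(c * C j i σ))) :=
            Finset.sum_le_sum fun σ _ => hpoint σ
        _ = Real.exp (c * ((t - ε) * r)) *
              ∑ σ : ∀ k, I k, (∏ k, p k (σ k)) * ∏ i, Real.exp (-(c * C j i σ)) := by
            rw [Finset.mul_sum]
        _ ≤ Real.exp (c * ((t - ε) * r)) * qq ^ r :=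
            mul_le_mul_of_nonneg_left hseq (Real.exp_pos _).le
        _ = (Real.exp (c * (t - ε)) * qq) ^ r := by
            rw [mul_pow, ← Real.exp_nat_mul]
            congr 2
            ring
        _ = B ^ r := by
            congr 1
            -- the key algebraic identity
            have hexp1 : Real.exp (c * (t - ε)) = cs ^ (-(1 - xx)) := by
              rw [Real.rpow_def_of_pos hcs0]
              congr 1
              rw [hcdef, hxxdef]
              field_simp
              ring
            have hqqeq : qq = y / xx := by
              rw [hqqdef, hcsdef, hydef, hxxdef]
              field_simp
              ring
            have hcsab : cs = (y / xx) / ((1 - y) / (1 - xx)) := by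
              rw [hcsdef]
              field_simp
            have hBval : B = (y / xx) ^ xx * ((1 - y) / (1 - xx)) ^ (1 - xx) := by
              rw [hBdef, Kfun]
              have hl1 : Real.logb 2 (xx / y) = -Real.logb 2 (y / xx) := by
                rw [← Real.logb_inv, inv_div]
              have hl2 : Real.logb 2 ((1 - xx) / (1 - y)) = -Real.logb 2 ((1 - y) / (1 - xx)) := by
                rw [← Real.logb_inv, inv_div]
              rw [hl1, hl2]
              have : -(xx * -Real.logb 2 (y / xx) + (1 - xx) * -Real.logb 2 ((1 - y) / (1 - xx)))
                  = Real.logb 2 (y / xx) * xx + Real.logb 2 ((1 - y) / (1 - xx)) * (1 - xx) := by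
                ring
              rw [this, Real.rpow_add two_pos, Real.rpow_mul (by norm_num : (0:ℝ) ≤ 2),
                Real.rpow_mul (by norm_num : (0:ℝ) ≤ 2),
                Real.rpow_logb two_pos (by norm_num) (by positivity),
                Real.rpow_logb two_pos (by norm_num) (by positivity)]
            rw [hexp1, hqqeq, hcsab, hBval]
            set a : ℝ := y / xx with hadef
            set b : ℝ := (1 - y) / (1 - xx) with hbdef
            have ha0 : 0 < a := by rw [hadef]; positivity
            have hb0 : 0 < b := by rw [hbdef]; positivity
            rw [Real.rpow_neg (div_nonneg ha0.le hb0.le), Real.div_rpow ha0.le hb0.le, inv_div]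
            have hsplit : a ^ xx * a ^ (1 - xx) = a := by
              rw [← Real.rpow_add ha0]
              norm_num
            have hane : a ^ (1 - xx) ≠ 0 := (Real.rpow_pos_of_pos ha0 _).ne'
            rw [div_mul_eq_mul_div, div_eq_iff hane]
            linear_combination (-(b ^ (1 - xx))) * hsplit
    · -- case ε = t
      subst heq
      have hxx1' : xx = 1 := by
        rw [hxxdef]
        rw [div_eq_one_iff_eq ht2s2.ne']
        ring
      have hBy : B = y := by
        rw [hBdef, hxx1']
        have : Kfun y 1 = -Real.logb 2 y := by
          simp [Kfun, one_div, Real.logb_inv]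
        rw [this, neg_neg, Real.rpow_logb two_pos (by norm_num) hy0]
      rw [hBy]
      -- sequential bound with indicator functions
      have hseq : ∑ σ : ∀ k, I k, (∏ k, p k (σ k)) *
          ∏ i, (if C j i σ = 0 then (1:ℝ) else 0) ≤ y ^ r := by
        apply seq_bound p hp0 hp1 _
          (fun i σ => by split_ifs <;> norm_num)
          (fun i σ σ' h => by rw [hCdep j i σ σ' h]) hy0.le
        intro i σ
        have := zero_prob (p i) (hp0 i) (hp1 i)
          (fun x => C j i (Function.update σ i x))
          ht hs (hCmean j i σ) (hCvar j i σ)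
        rw [← hydef] at this
        exact this
      refine le_trans (Finset.sum_le_sum fun σ _ => ?_) hseq
      split_ifs with h
      · have hall : ∀ i, C j i σ = 0 := by
          intro i
          have hsum0 : (∑ i, C j i σ) ≤ 0 := by
            rw [sub_self, zero_mul] at h
            exact h
          have h1 : ∀ i ∈ Finset.univ, 0 ≤ C j i σ := fun i _ => hC0 j i σ
          have := (Finset.sum_eq_zero_iff_of_nonneg h1).1
            (le_antisymm hsum0 (Finset.sum_nonneg h1))
          exact this i (Finset.mem_univ i)
        rw [Finset.prod_congr rfl fun i _ => if_pos (hall i), Finset.prod_const_one, mul_one]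
      · exact mul_nonneg (Finset.prod_nonneg fun k _ => hp0 k _)
          (Finset.prod_nonneg fun i _ => by split_ifs <;> norm_num)
  -- union bound and conclusion
  calc (∑ σ : ∀ k, I k,
        if ∃ j : Fin m, (∑ i, C j i σ) ≤ (t - ε) * r then ∏ k, p k (σ k) else 0)
      ≤ ∑ σ : ∀ k, I k, ∑ j : Fin m,
          (if (∑ i, C j i σ) ≤ (t - ε) * r then ∏ k, p k (σ k) else 0) := by
        apply Finset.sum_le_sum
        intro σ _
        have hnn : ∀ j : Fin m, (0:ℝ) ≤
            if (∑ i, C j i σ) ≤ (t - ε) * r then ∏ k, p k (σ k) else 0 := by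
          intro j
          split_ifs
          · exact Finset.prod_nonneg fun k _ => hp0 k _
          · exact le_rfl
        by_cases h : ∃ j : Fin m, (∑ i, C j i σ) ≤ (t - ε) * r
        · rw [if_pos h]
          obtain ⟨j₀, hj₀⟩ := h
          calc ∏ k, p k (σ k)
              = (if (∑ i, C j₀ i σ) ≤ (t - ε) * r then ∏ k, p k (σ k) else 0) :=
                (if_pos hj₀).symm
            _ ≤ ∑ j : Fin m, (if (∑ i, C j i σ) ≤ (t - ε) * r then ∏ k, p k (σ k) else 0) :=
                Finset.single_le_sum (fun j _ => hnn j) (Finset.mem_univ j₀)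
        · rw [if_neg h]
          exact Finset.sum_nonneg fun j _ => hnn j
    _ = ∑ j : Fin m, ∑ σ : ∀ k, I k,
          (if (∑ i, C j i σ) ≤ (t - ε) * r then ∏ k, p k (σ k) else 0) := Finset.sum_comm
    _ ≤ ∑ j : Fin m, B ^ r := Finset.sum_le_sum fun j _ => hperj j
    _ = (m : ℝ) * B ^ r := by
        simp [Finset.sum_const, Finset.card_univ, nsmul_eq_mul]
    _ = (m : ℝ) * (2:ℝ) ^ (-(Kfun y xx * (r:ℝ))) := by rw [hBr]
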